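/- Let V be a finite-dimensional vector space over a field F and let L : V → V be a linear map. Then for every α ∈ V there exists α' ∈ V such that: α - α' ∈ range(L - id_V); α' lies in the generalized eigenspace maxGenEigenspace(L, 1); and the cyclic subspace ⟨α'⟩ = span_F{ Lⁿ(α') : n ∈ ℕ } admits an L-invariant complement in V, i.e. there is an L-invariant subspace W of V with ⟨α'⟩ ⊕ W = V. -/

import Mathlib

open Polynomial DirectSum Finset

set_option maxHeartbeats 1000000 in
theorem model_claim {F : Type*} [Field F] {ι : Type*} [Fintype ι] [DecidableEq ι]
    (p : ι → F[X]) (hp : ∀ i, Irreducible (p i)) (e : ι → ℕ)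
    (a : ⨁ i, F[X] ⧸ (Submodule.span F[X] {p i ^ e i})) :
    ∃ a' : ⨁ i, F[X] ⧸ (Submodule.span F[X] {p i ^ e i}),
      (∃ m, a - a' = (X - C 1 : F[X]) • m) ∧
      (∃ k : ℕ, ((X - C 1 : F[X]) ^ k) • a' = 0) ∧
      ∃ W, IsCompl (Submodule.span F[X] {a'}) W := by
  classical
  set π : F[X] := X - C 1 with hπ
  have hπirr : Irreducible π := Polynomial.irreducible_X_sub_C 1
  have hdvd1 : ∀ r : F[X], r.eval 1 = 0 → π ∣ r := fun r h => Polynomial.dvd_iff_isRoot.mpr h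
  clear_value π
  choose q hq using fun i => Submodule.Quotient.mk_surjective _ (a i)
  set c : ι → F := fun i => (q i).eval 1 with hc
  set S : Finset ι := Finset.univ.filter (fun i => Associated (p i) π ∧ c i ≠ 0) with hS
  have hmk0 : ∀ (i : ι) (r : F[X]), p i ^ e i ∣ r →
      (Submodule.Quotient.mk r : F[X] ⧸ Submodule.span F[X] {p i ^ e i}) = 0 := by
    rintro i r ⟨t, ht⟩
    rw [Submodule.Quotient.mk_eq_zero]
    exact Submodule.mem_span_singleton.mpr ⟨t, by rw [smul_eq_mul, mul_comm, ht]⟩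
  set a' : ⨁ i, F[X] ⧸ (Submodule.span F[X] {p i ^ e i}) :=
    ∑ i ∈ S, DirectSum.lof F[X] ι (fun i => F[X] ⧸ (Submodule.span F[X] {p i ^ e i})) i
      (Submodule.Quotient.mk (C (c i))) with ha'
  have ha'c : ∀ j, a' j = if j ∈ S then Submodule.Quotient.mk (C (c j)) else 0 := by
    intro j
    rw [ha', DFinsupp.finset_sum_apply]
    by_cases hj : j ∈ S
    · rw [if_pos hj, Finset.sum_eq_single_of_mem j hj]
      · rw [DirectSum.lof_eq_of, DirectSum.of_eq_same]
      · intro i hi hij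
        rw [DirectSum.lof_eq_of, DirectSum.of_eq_of_ne _ _ _ hij.symm]
    · rw [if_neg hj, Finset.sum_eq_zero]
      intro i hi
      exact DirectSum.of_eq_of_ne _ _ _ (fun h => hj (h ▸ hi))
  have h1 : ∀ j, ∃ r : F[X] ⧸ Submodule.span F[X] {p j ^ e j}, a j - a' j = π • r := by
    intro j
    by_cases hA : Associated (p j) π
    · by_cases hcj : c j = 0
      · have hjS : j ∉ S := by simp [hS, hcj]
        obtain ⟨t, ht⟩ := hdvd1 (q j) hcj
        refine ⟨Submodule.Quotient.mk t, ?_⟩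
        rw [ha'c j, if_neg hjS, sub_zero, ← hq j, ht, ← smul_eq_mul,
          Submodule.Quotient.mk_smul]
      · have hjS : j ∈ S := by simp [hS, hA, hcj]
        obtain ⟨t, ht⟩ := hdvd1 (q j - C (c j)) (by simp [hc])
        refine ⟨Submodule.Quotient.mk t, ?_⟩
        rw [ha'c j, if_pos hjS, ← hq j, ← Submodule.Quotient.mk_sub, ht, ← smul_eq_mul,
          Submodule.Quotient.mk_smul]
    · have hjS : j ∉ S := by simp [hS, hA]
      have hnd : ¬ p j ∣ π := fun h => hA ((hp j).associated_of_dvd hπirr h)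
      have hco : IsCoprime π (p j ^ e j) := (((hp j).coprime_iff_not_dvd).mpr hnd).symm.pow_right
      obtain ⟨u, v, huv⟩ := hco
      refine ⟨Submodule.Quotient.mk (u * q j), ?_⟩
      have hq' : q j = π * (u * q j) + (v * p j ^ e j) * q j := by
        linear_combination (-(q j)) * huv
      have hmain : (Submodule.Quotient.mk (q j) : F[X] ⧸ Submodule.span F[X] {p j ^ e j}) =
          π • Submodule.Quotient.mk (u * q j) := by
        conv_lhs => rw [hq']
        rw [Submodule.Quotient.mk_add, hmk0 j (v * p j ^ e j * q j) ⟨v * q j, by ring⟩, add_zero,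
          ← smul_eq_mul, Submodule.Quotient.mk_smul]
      rw [ha'c j, if_neg hjS, sub_zero, ← hq j, hmain]
  choose r hr using h1
  refine ⟨a', ⟨∑ j, DirectSum.lof F[X] ι _ j (r j), ?_⟩, ?_, ?_⟩
  · calc a - a' = ∑ j, DirectSum.of _ j ((a - a') j) := (DirectSum.sum_univ_of _).symm
      _ = ∑ j, DirectSum.lof F[X] ι _ j (π • r j) := by
          refine Finset.sum_congr rfl fun j _ => ?_
          rw [DirectSum.lof_eq_of, DirectSum.sub_apply, hr j]
      _ = π • ∑ j, DirectSum.lof F[X] ι _ j (r j) := by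
          rw [Finset.smul_sum]
          exact Finset.sum_congr rfl fun j _ => (LinearMap.map_smul _ _ _)
  · refine ⟨Finset.univ.sup e, ?_⟩
    rw [ha', Finset.smul_sum]
    apply Finset.sum_eq_zero
    intro i hi
    rw [← LinearMap.map_smul]
    have hA : Associated (p i) π := by
      rw [hS, Finset.mem_filter] at hi; exact hi.2.1
    have hdvd : p i ^ e i ∣ π ^ (Finset.univ.sup e) * C (c i) :=
      dvd_mul_of_dvd_left (((hA.pow_pow).dvd).trans
        (pow_dvd_pow π (Finset.le_sup (Finset.mem_univ i)))) _
    have hz : (π ^ (Finset.univ.sup e)) •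
        (Submodule.Quotient.mk (C (c i)) : F[X] ⧸ Submodule.span F[X] {p i ^ e i}) = 0 := by
      rw [← Submodule.Quotient.mk_smul, smul_eq_mul]; exact hmk0 _ _ hdvd
    rw [hz, map_zero]
  · rcases Finset.eq_empty_or_nonempty S with hSe | hSne
    · refine ⟨⊤, ?_⟩
      have : a' = 0 := by rw [ha', hSe, Finset.sum_empty]
      rw [this, Submodule.span_zero_singleton]
      exact isCompl_bot_top
    · obtain ⟨i₀, hi₀S, hmax⟩ := Finset.exists_max_image S e hSne
      have hi₀ : Associated (p i₀) π ∧ c i₀ ≠ 0 := by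
        rw [hS, Finset.mem_filter] at hi₀S; exact hi₀S.2
      set W : Submodule F[X] (⨁ i, F[X] ⧸ (Submodule.span F[X] {p i ^ e i})) :=
        ⨆ (i : ι) (_ : i ≠ i₀), LinearMap.range
          (DirectSum.lof F[X] ι (fun i => F[X] ⧸ (Submodule.span F[X] {p i ^ e i})) i) with hW
      have hWmem : ∀ (i : ι), i ≠ i₀ → ∀ x, DirectSum.lof F[X] ι
          (fun i => F[X] ⧸ (Submodule.span F[X] {p i ^ e i})) i x ∈ W := by
        intro i hi x
        exact Submodule.mem_iSup_of_mem i (Submodule.mem_iSup_of_mem hi (LinearMap.mem_range_self _ x))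
      have hWzero : ∀ x ∈ W, x i₀ = 0 := by
        intro x hx
        have hle : W ≤ LinearMap.ker (DirectSum.component F[X] ι
            (fun i => F[X] ⧸ (Submodule.span F[X] {p i ^ e i})) i₀) := by
          refine iSup₂_le fun i hi => ?_
          rintro _ ⟨y, rfl⟩
          simp only [LinearMap.mem_ker]
          rw [DirectSum.component.of, dif_neg hi]
        exact hle hx
      refine ⟨W, ?_, ?_⟩
      · rw [Submodule.disjoint_def]
        intro x hx hxW
        obtain ⟨s, hs⟩ := Submodule.mem_span_singleton.mp hx
        have hx0 : x i₀ = 0 := hWzero x hxW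
        have hsa : (s • a') i₀ = Submodule.Quotient.mk (s * C (c i₀)) := by
          rw [DFinsupp.smul_apply, ha'c i₀, if_pos hi₀S, ← Submodule.Quotient.mk_smul,
            smul_eq_mul]
        have hdvd : p i₀ ^ e i₀ ∣ s := by
          have h0 : (Submodule.Quotient.mk (s * C (c i₀)) :
              F[X] ⧸ Submodule.span F[X] {p i₀ ^ e i₀}) = 0 := by
            rw [← hsa, hs, hx0]
          rw [Submodule.Quotient.mk_eq_zero] at h0
          obtain ⟨t, ht⟩ := Submodule.mem_span_singleton.mp h0
          refine ⟨t * C (c i₀)⁻¹, ?_⟩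
          have : s * C (c i₀) * C (c i₀)⁻¹ = t * p i₀ ^ e i₀ * C (c i₀)⁻¹ := by
            rw [← ht, smul_eq_mul]
          calc s = s * C (c i₀) * C (c i₀)⁻¹ := by
                  rw [mul_assoc, ← C_mul, mul_inv_cancel₀ hi₀.2, C_1, mul_one]
            _ = p i₀ ^ e i₀ * (t * C (c i₀)⁻¹) := by rw [this]; ring
        have hs0 : s • a' = 0 := by
          rw [ha', Finset.smul_sum]
          apply Finset.sum_eq_zero
          intro i hi
          have hiA : Associated (p i) π ∧ c i ≠ 0 := by
            rw [hS, Finset.mem_filter] at hi; exact hi.2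
          have hdvd' : p i ^ e i ∣ s := by
            refine dvd_trans ?_ hdvd
            calc p i ^ e i ∣ π ^ e i := (hiA.1.pow_pow).dvd
              _ ∣ π ^ e i₀ := pow_dvd_pow π (hmax i hi)
              _ ∣ p i₀ ^ e i₀ := ((hi₀.1.pow_pow).symm.dvd)
          rw [← LinearMap.map_smul]
          have hz : s • (Submodule.Quotient.mk (C (c i)) :
              F[X] ⧸ Submodule.span F[X] {p i ^ e i}) = 0 := by
            rw [← Submodule.Quotient.mk_smul, smul_eq_mul]
            exact hmk0 _ _ (dvd_mul_of_dvd_left hdvd' _)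
          rw [hz, map_zero]
        rw [← hs, hs0]
      · rw [codisjoint_iff_le_sup]
        intro x _
        rw [← DirectSum.sum_univ_of x]
        refine Submodule.sum_mem _ fun i _ => ?_
        rcases eq_or_ne i i₀ with rfl | hi
        · -- of i₀ (x i₀) ∈ span {a'} ⊔ W
          obtain ⟨t, ht⟩ := Submodule.Quotient.mk_surjective _ (x i)
          have hbase : DirectSum.lof F[X] ι (fun i => F[X] ⧸ (Submodule.span F[X] {p i ^ e i})) i
              (Submodule.Quotient.mk (C (c i))) ∈ Submodule.span F[X] {a'} ⊔ W := by
            have hrest : a' - DirectSum.lof F[X] ι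
                (fun i => F[X] ⧸ (Submodule.span F[X] {p i ^ e i})) i
                (Submodule.Quotient.mk (C (c i))) ∈ W := by
              rw [ha', ← Finset.sum_erase_add S _ hi₀S]
              erw [add_sub_cancel_right]
              refine Submodule.sum_mem _ fun j hj => ?_
              exact hWmem j (Finset.ne_of_mem_erase hj) _
            have : DirectSum.lof F[X] ι (fun i => F[X] ⧸ (Submodule.span F[X] {p i ^ e i})) i
                (Submodule.Quotient.mk (C (c i))) =
                a' - (a' - DirectSum.lof F[X] ι
                  (fun i => F[X] ⧸ (Submodule.span F[X] {p i ^ e i})) i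
                  (Submodule.Quotient.mk (C (c i)))) := (sub_sub_cancel a' _).symm
            rw [this]
            exact Submodule.mem_sup.mpr ⟨a', Submodule.mem_span_singleton_self a', (-1 : F[X]) • _,
              Submodule.smul_mem _ _ hrest, by ext j; simp [DirectSum.smul_apply, DirectSum.sub_apply, DirectSum.add_apply]⟩
          have key : DirectSum.of (fun i => F[X] ⧸ (Submodule.span F[X] {p i ^ e i})) i (x i) =
              (t * C (c i)⁻¹) • DirectSum.lof F[X] ι
                (fun i => F[X] ⧸ (Submodule.span F[X] {p i ^ e i})) i
                (Submodule.Quotient.mk (C (c i))) := by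
            rw [← LinearMap.map_smul, ← Submodule.Quotient.mk_smul, smul_eq_mul,
              DirectSum.lof_eq_of, ← ht]
            congr 1
            rw [mul_assoc, ← C_mul, inv_mul_cancel₀ hi₀.2, C_1, mul_one]
          rw [key]
          exact Submodule.smul_mem _ _ hbase
        · exact Submodule.mem_sup_right (hWmem i hi _)


universe uF uV

theorem directSum_decomp {F : Type uF} [Field F] {M : Type uV} [AddCommGroup M] [Module F[X] M]
    [Module.Finite F[X] M] (htors : Module.IsTorsion F[X] M) :
    ∃ (ι : Type uF) (_ : Fintype ι) (p : ι → F[X]) (_ : ∀ i, Irreducible (p i)) (e : ι → ℕ),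
      Nonempty (M ≃ₗ[F[X]] ⨁ i, F[X] ⧸ (Submodule.span F[X] {p i ^ e i})) := by
  have h1 : Module.Finite F[X] (ULift.{uF} M) :=
    Module.Finite.equiv ULift.moduleEquiv.symm
  have h2 : Module.IsTorsion F[X] (ULift.{uF} M) := by
    intro x
    obtain ⟨c, hc⟩ := @htors x.down
    exact ⟨c, by apply ULift.ext; simpa using hc⟩
  obtain ⟨ι, f, pp, hp, e, ⟨g⟩⟩ := Module.equiv_directSum_of_isTorsion (M := ULift.{uF} M) h2
  exact ⟨ι, f, pp, hp, e, ⟨ULift.moduleEquiv.symm.trans g⟩⟩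


/-- For every `α ∈ V` there exists `α'` with `α - α' ∈ range (L - id)`,
`α'` in the generalized eigenspace of `L` for eigenvalue 1, and such that the cyclic
subspace `⟨α'⟩ = span {Lⁿ α' : n ∈ ℕ}` has an `L`-invariant complement in `V`. -/
theorem exists_simple_representative
    {F V : Type*} [Field F] [AddCommGroup V] [Module F V] [FiniteDimensional F V]
    (L : V →ₗ[F] V) (α : V) :
    ∃ α' : V,
      α - α' ∈ LinearMap.range (L - LinearMap.id : V →ₗ[F] V) ∧
      α' ∈ Module.End.maxGenEigenspace L 1 ∧
      ∃ W : Submodule F V, (∀ w ∈ W, L w ∈ W) ∧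
        IsCompl (Submodule.span F (Set.range fun n : ℕ => (L ^ n) α')) W := by
  classical
  have htors : Module.IsTorsion F[X] (Module.AEval' L) :=
    Module.AEval.isTorsion_of_finiteDimensional F V L
  obtain ⟨ι, _, p, hp, e, ⟨E⟩⟩ := directSum_decomp htors
  haveI : DecidableEq ι := Classical.decEq ι
  obtain ⟨a', ⟨m, hm⟩, ⟨k, hk⟩, ⟨W, hWc⟩⟩ := model_claim p hp e (E (Module.AEval'.of L α))
  set α' : V := (Module.AEval'.of L).symm (E.symm a') with hα'
  have hEof : E.symm a' = Module.AEval'.of L α' := by rw [hα']; simp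
  refine ⟨α', ?_, ?_, ?_⟩
  · refine ⟨(Module.AEval'.of L).symm (E.symm m), ?_⟩
    have h3 : Module.AEval'.of L α - Module.AEval'.of L α' = (X - C 1 : F[X]) • E.symm m := by
      have h := congrArg E.symm hm
      simpa [map_sub, map_smul, hEof] using h
    have h4 : α - α' = (Polynomial.aeval L (X - C 1 : F[X])) •
        ((Module.AEval'.of L).symm (E.symm m)) := by
      have h := congrArg (Module.AEval'.of L).symm h3
      simpa [map_sub, Module.AEval.of_symm_smul] using h
    have h5 : Polynomial.aeval L (X - C 1 : F[X]) = L - LinearMap.id := by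
      simp [map_sub, Polynomial.aeval_X, Polynomial.aeval_C]
      rfl
    rw [h4, h5]
    rfl
  · rw [Module.End.mem_maxGenEigenspace]
    refine ⟨k, ?_⟩
    have h3 : ((X - C 1 : F[X]) ^ k) • (Module.AEval'.of L α') = 0 := by
      rw [← hEof, ← map_smul, hk, map_zero]
    have h4 : (Polynomial.aeval L ((X - C 1 : F[X]) ^ k)) • α' = 0 := by
      have h := congrArg (Module.AEval'.of L).symm h3
      simpa [Module.AEval.of_symm_smul] using h
    have h5 : Polynomial.aeval L ((X - C 1 : F[X]) ^ k) =
        (L - (1 : F) • (1 : Module.End F V)) ^ k := by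
      simp [map_pow, map_sub, Polynomial.aeval_X, Polynomial.aeval_C]
    rw [h5] at h4
    exact h4
  · let G := (Submodule.orderIsoMapComap E).symm
    have hcompl : IsCompl (G (Submodule.span F[X] {a'})) (G W) := G.isCompl hWc
    let pP := (Module.AEval.mapSubmodule F V L).symm (G (Submodule.span F[X] {a'}))
    let pW := (Module.AEval.mapSubmodule F V L).symm (G W)
    have hc2 : IsCompl (pP : Submodule F V) (pW : Submodule F V) :=
      (Module.End.invtSubmodule.isCompl_iff _).mp
        ((Module.AEval.mapSubmodule F V L).symm.isCompl hcompl)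
    have hmemP : ∀ x : V, x ∈ (pP : Submodule F V) ↔
        E (Module.AEval'.of L x) ∈ Submodule.span F[X] {a'} := by
      intro x
      rw [show (pP : Submodule F V) = ((Module.AEval.mapSubmodule F V L).symm
        (G (Submodule.span F[X] {a'})) : Submodule F V) from rfl]
      rw [Module.AEval.mem_mapSubmodule_symm_apply]
      show Module.AEval'.of L x ∈ (Submodule.orderIsoMapComap E).symm (Submodule.span F[X] {a'}) ↔ _
      rw [Submodule.orderIsoMapComap_symm_apply]
      exact Submodule.mem_comap
    have hWinv : ∀ w ∈ (pW : Submodule F V), L w ∈ (pW : Submodule F V) := by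
      intro w hw
      have h := pW.2 hw
      simpa using h
    have hspan : Submodule.span F (Set.range fun n : ℕ => (L ^ n) α') = (pP : Submodule F V) := by
      apply le_antisymm
      · rw [Submodule.span_le]
        rintro _ ⟨n, rfl⟩
        rw [SetLike.mem_coe, hmemP]
        have hof : Module.AEval'.of L ((L ^ n) α') = (X ^ n : F[X]) • Module.AEval'.of L α' := by
          rw [← Module.AEval.of_aeval_smul]
          simp [Polynomial.aeval_X_pow]
        rw [hof, ← hEof, map_smul, LinearEquiv.apply_symm_apply]
        exact Submodule.smul_mem _ _ (Submodule.mem_span_singleton_self a')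
      · intro x hx
        rw [hmemP] at hx
        obtain ⟨s, hs⟩ := Submodule.mem_span_singleton.mp hx
        have hx2 : x = (Polynomial.aeval L s) α' := by
          have h := congrArg E.symm hs
          rw [map_smul, hEof, LinearEquiv.symm_apply_apply] at h
          have h2 := congrArg (Module.AEval'.of L).symm h
          rw [Module.AEval.of_symm_smul] at h2
          simpa using h2.symm
        rw [hx2, Polynomial.aeval_eq_sum_range]
        rw [LinearMap.coe_sum, Finset.sum_apply]
        refine Submodule.sum_mem _ fun i _ => ?_
        rw [LinearMap.smul_apply]
        exact Submodule.smul_mem _ _ (Submodule.subset_span ⟨i, rfl⟩)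
    refine ⟨(pW : Submodule F V), hWinv, ?_⟩
    rw [hspan]
    exact hc2
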